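/- Let C₁, C₂ be nonempty closed convex subsets of a real Hilbert space H with projections P₁, P₂, and let (z_n) be a sequence in C₂ such that |z_n - P₁ z_n| → d(C₁,C₂). Then |z_n - P₂(P₁ z_n)| → 0 as n → ∞. -/

import Mathlib

open Filter Topology

/-- `P` is the nearest point projection of a real Hilbert space onto `C`. -/
def IsNearestPointProj {H : Type*} [NormedAddCommGroup H] [InnerProductSpace ℝ H]
    (C : Set H) (P : H → H) : Prop :=
  ∀ x, P x ∈ C ∧ ∀ y ∈ C, ‖x - P x‖ ≤ ‖x - y‖

/-- The distance between two sets. -/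
noncomputable def setDist {H : Type*} [NormedAddCommGroup H] (C₁ C₂ : Set H) : ℝ :=
  sInf {d : ℝ | ∃ a ∈ C₁, ∃ b ∈ C₂, d = ‖a - b‖}

lemma proj_inner_le {H : Type*} [NormedAddCommGroup H] [InnerProductSpace ℝ H]
    {C : Set H} (hC : Convex ℝ C) {x c : H} (hc : c ∈ C)
    (hmin : ∀ y ∈ C, ‖x - c‖ ≤ ‖x - y‖) :
    ∀ w ∈ C, inner ℝ (x - c) (w - c) ≤ (0 : ℝ) := by
  haveI : Nonempty C := ⟨⟨c, hc⟩⟩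
  have heq : ‖x - c‖ = ⨅ w : C, ‖x - (w : H)‖ := by
    refine le_antisymm (le_ciInf fun w => hmin w w.2) ?_
    have hb : BddBelow (Set.range fun w : C => ‖x - (w : H)‖) :=
      ⟨0, by rintro r ⟨w, rfl⟩; positivity⟩
    exact ciInf_le hb ⟨c, hc⟩
  exact (norm_eq_iInf_iff_real_inner_le_zero hC hc).mp heq

theorem stmt10 {H : Type*} [NormedAddCommGroup H] [InnerProductSpace ℝ H] [CompleteSpace H]
    (C₁ C₂ : Set H) (h₁ : C₁.Nonempty) (h₁c : IsClosed C₁) (h₁v : Convex ℝ C₁)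
    (h₂ : C₂.Nonempty) (h₂c : IsClosed C₂) (h₂v : Convex ℝ C₂)
    (P₁ P₂ : H → H) (hP₁ : IsNearestPointProj C₁ P₁) (hP₂ : IsNearestPointProj C₂ P₂)
    (z : ℕ → H) (hz : ∀ n, z n ∈ C₂)
    (hlim : Tendsto (fun n => ‖z n - P₁ (z n)‖) atTop (𝓝 (setDist C₁ C₂))) :
    Tendsto (fun n => ‖z n - P₂ (P₁ (z n))‖) atTop (𝓝 0) := by
  set d := setDist C₁ C₂ with hd
  have hbdd : ∀ r ∈ {d : ℝ | ∃ a ∈ C₁, ∃ b ∈ C₂, d = ‖a - b‖}, (0:ℝ) ≤ r := by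
    rintro r ⟨a, _, b, _, rfl⟩; positivity
  have hd0 : 0 ≤ d := by
    obtain ⟨a, ha⟩ := h₁; obtain ⟨b, hb⟩ := h₂
    exact le_csInf ⟨‖a - b‖, a, ha, b, hb, rfl⟩ hbdd
  have hdle : ∀ n, d ≤ ‖P₁ (z n) - P₂ (P₁ (z n))‖ := fun n =>
    csInf_le ⟨0, hbdd⟩ ⟨P₁ (z n), (hP₁ (z n)).1, P₂ (P₁ (z n)), (hP₂ (P₁ (z n))).1, rfl⟩
  have key : ∀ n, ‖z n - P₂ (P₁ (z n))‖ ^ 2 ≤ ‖z n - P₁ (z n)‖ ^ 2 - d ^ 2 := by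
    intro n
    set a := z n
    set b := P₁ (z n)
    set c := P₂ (P₁ (z n))
    have hinner : inner ℝ (b - c) (a - c) ≤ (0:ℝ) :=
      proj_inner_le h₂v (hP₂ b).1 (hP₂ b).2 a (hz n)
    have hexp : ‖a - b‖ ^ 2 = ‖a - c‖ ^ 2 - 2 * inner ℝ (a - c) (b - c) + ‖b - c‖ ^ 2 := by
      have := @norm_sub_sq_real H _ _ (a - c) (b - c)
      simpa [sub_sub_sub_cancel_right] using this
    have hcomm : inner ℝ (a - c) (b - c) = inner ℝ (b - c) (a - c) := real_inner_comm _ _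
    have hd2 : d ^ 2 ≤ ‖b - c‖ ^ 2 := by
      have := hdle n
      nlinarith [norm_nonneg (b - c)]
    nlinarith
  have hsq : Tendsto (fun n => ‖z n - P₂ (P₁ (z n))‖ ^ 2) atTop (𝓝 0) := by
    have hub : Tendsto (fun n => ‖z n - P₁ (z n)‖ ^ 2 - d ^ 2) atTop (𝓝 0) := by
      have := (hlim.pow 2).sub_const (d ^ 2)
      simpa using this
    exact squeeze_zero (fun n => by positivity) key hub
  have := (Real.continuous_sqrt.tendsto 0).comp hsq
  rw [Real.sqrt_zero] at this
  refine this.congr fun n => ?_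
  simp [Function.comp, Real.sqrt_sq (norm_nonneg _)]
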